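/- Let N be a finite index set and r, c ∈ N two distinct indices. Let a, a' : N → ℝ with a_c = 1 and a'_c = −1, and let b, b' ∈ ℝ. Let ℓ¹, u¹, ℓ², u² : N∖{c} → ℝ be bounds with ℓ¹_j ≤ ℓ²_j ≤ u²_j ≤ u¹_j for all j ∈ N∖{c}. Define β := min over x ∈ [ℓ¹, u¹] of ( b − a_r·x_r − Σ_{j∈N∖{r,c}} a_j·x_j ), the lower bound on x_c propagated by the constraint Σ_{j∈N} a_j x_j ≥ b over the earlier box. Then every x ∈ [ℓ², u²] (indexed by N∖{c}) satisfying the aggregated constraint (a_r + a'_r)·x_r + Σ_{j∈N∖{r,c}} (a_j + a'_j)·x_j ≥ b + b' satisfies a'_r·x_r ≥ β + min over y ∈ [ℓ², u²] of ( b' − Σ_{j∈N∖{r,c}} a'_j·y_j ); that is, the linear combination of the reason constraint Σ_{j∈N} a'_j x_j ≥ b' and the constraint that propagated x_c, eliminating x_c, implies on x_r a bound at least as strong as the one the reason constraint implies using x_c ≥ β. -/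
import Mathlib

lemma mul_le_max_bnd (α l u t : ℝ) (hl : l ≤ t) (hu : t ≤ u) :
    α * t ≤ max (α * l) (α * u) := by
  rcases le_or_gt 0 α with h | h
  · exact le_max_of_le_right (by nlinarith)
  · exact le_max_of_le_left (by nlinarith)

/-- Proposition 5: eliminating the continuous variable `x_c` by aggregating the
reason constraint with the constraint that propagated `x_c` yields a constraint
that implies a bound on `x_r` at least as strong as the one the reason constraint
implies using `x_c ≥ β`. -/
theorem aggregation_propagates_at_least_as_strong
    {ι : Type*} [DecidableEq ι] (N : Finset ι) (r c : ι)
    (hrN : r ∈ N) (hcN : c ∈ N) (hrc : r ≠ c)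
    (a a' : ι → ℝ) (hac : a c = 1) (ha'c : a' c = -1) (b b' : ℝ)
    (ℓ1 u1 ℓ2 u2 : ι → ℝ)
    (hbounds : ∀ j ∈ N.erase c, ℓ1 j ≤ ℓ2 j ∧ ℓ2 j ≤ u2 j ∧ u2 j ≤ u1 j)
    (β : ℝ)
    (hβ : β = b - ∑ j ∈ N.erase c, max (a j * ℓ1 j) (a j * u1 j))
    (x : ι → ℝ) (hx : ∀ j ∈ N.erase c, ℓ2 j ≤ x j ∧ x j ≤ u2 j)
    (hagg : (a r + a' r) * x r
        + ∑ j ∈ (N.erase c).erase r, (a j + a' j) * x j ≥ b + b') :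
    a' r * x r
      ≥ β + (b' - ∑ j ∈ (N.erase c).erase r, max (a' j * ℓ2 j) (a' j * u2 j)) := by
  have hrK : r ∈ N.erase c := Finset.mem_erase.mpr ⟨hrc, hrN⟩
  -- termwise bounds
  have h1 : ∑ j ∈ (N.erase c).erase r, a j * x j
      ≤ ∑ j ∈ (N.erase c).erase r, max (a j * ℓ1 j) (a j * u1 j) := by
    refine Finset.sum_le_sum fun j hj => ?_
    have hj' := Finset.mem_of_mem_erase hj
    obtain ⟨hb1, hb2, hb3⟩ := hbounds j hj'
    obtain ⟨hx1, hx2⟩ := hx j hj'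
    exact mul_le_max_bnd _ _ _ _ (le_trans hb1 hx1) (le_trans hx2 hb3)
  have h2 : a r * x r ≤ max (a r * ℓ1 r) (a r * u1 r) := by
    obtain ⟨hb1, hb2, hb3⟩ := hbounds r hrK
    obtain ⟨hx1, hx2⟩ := hx r hrK
    exact mul_le_max_bnd _ _ _ _ (le_trans hb1 hx1) (le_trans hx2 hb3)
  have h3 : ∑ j ∈ (N.erase c).erase r, a' j * x j
      ≤ ∑ j ∈ (N.erase c).erase r, max (a' j * ℓ2 j) (a' j * u2 j) := by
    refine Finset.sum_le_sum fun j hj => ?_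
    obtain ⟨hx1, hx2⟩ := hx j (Finset.mem_of_mem_erase hj)
    exact mul_le_max_bnd _ _ _ _ hx1 hx2
  have hsplit : max (a r * ℓ1 r) (a r * u1 r)
      + ∑ j ∈ (N.erase c).erase r, max (a j * ℓ1 j) (a j * u1 j)
      = ∑ j ∈ N.erase c, max (a j * ℓ1 j) (a j * u1 j) :=
    Finset.add_sum_erase _ (fun j => max (a j * ℓ1 j) (a j * u1 j)) hrK
  have hsum : ∑ j ∈ (N.erase c).erase r, (a j + a' j) * x j
      = ∑ j ∈ (N.erase c).erase r, a j * x j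
        + ∑ j ∈ (N.erase c).erase r, a' j * x j := by
    rw [← Finset.sum_add_distrib]
    exact Finset.sum_congr rfl fun j _ => by ring
  rw [hsum] at hagg
  rw [hβ]
  linarith [hagg, h1, h2, h3, hsplit]
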